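/- Let k^{bc} be a Killing 2-tensor on ℝ^n. Then the second-order differential operator D defined on smooth functions f : ℝ^n → ℝ by D f = k^{bc} ∂_b ∂_c f + (∂_r k^{rc}) ∂_c f commutes with the Laplace operator: Δ∘D = D∘Δ on smooth functions. -/

import Mathlib

noncomputable section

/-- Partial derivative `∂_a f` in the `a`-th coordinate direction on `ℝⁿ`. -/
def pd {n : ℕ} (a : Fin n) (f : (Fin n → ℝ) → ℝ) : (Fin n → ℝ) → ℝ :=
  fun x => fderiv ℝ f x (Pi.single a 1)

/-- Raised partial derivative `∂^a f = g^{ab} ∂_b f`. -/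
def pdUp {n : ℕ} (ginv : Matrix (Fin n) (Fin n) ℝ) (a : Fin n)
    (f : (Fin n → ℝ) → ℝ) : (Fin n → ℝ) → ℝ :=
  fun x => ∑ b, ginv a b * pd b f x

/-- Laplace operator `Δ f = g^{ab} ∂_a ∂_b f`. -/
def lap {n : ℕ} (ginv : Matrix (Fin n) (Fin n) ℝ) (f : (Fin n → ℝ) → ℝ) :
    (Fin n → ℝ) → ℝ :=
  fun x => ∑ a, ∑ b, ginv a b * pd a (pd b f) x

/-- Iterated partial derivative `∂_{i 0} ⋯ ∂_{i (m-1)} f` along a tuple of indices. -/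
def pdIter {n : ℕ} : (m : ℕ) → (Fin m → Fin n) → ((Fin n → ℝ) → ℝ) → ((Fin n → ℝ) → ℝ)
  | 0, _, f => f
  | m + 1, i, f => pd (i 0) (pdIter m (fun j => i j.succ) f)

/-- A (smooth, totally symmetric) Killing `ℓ`-tensor: `∂^{(a₀} k^{a₁…a_ℓ)} = 0`. -/
def IsKillingTensor {n : ℕ} (ginv : Matrix (Fin n) (Fin n) ℝ) (ℓ : ℕ)
    (k : (Fin ℓ → Fin n) → (Fin n → ℝ) → ℝ) : Prop :=
  (∀ i, ContDiff ℝ (⊤ : ℕ∞) (k i)) ∧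
  (∀ (σ : Equiv.Perm (Fin ℓ)) (i : Fin ℓ → Fin n), k (i ∘ σ) = k i) ∧
  (∀ (i : Fin (ℓ + 1) → Fin n) (x : Fin n → ℝ),
    ∑ σ : Equiv.Perm (Fin (ℓ + 1)),
      pdUp ginv (i (σ 0)) (k (fun j => i (σ j.succ))) x = 0)

end

section Lemmas
variable {n : ℕ}

lemma pd_smooth {f : (Fin n → ℝ) → ℝ} (hf : ContDiff ℝ (⊤ : ℕ∞) f) (a : Fin n) :
    ContDiff ℝ (⊤ : ℕ∞) (pd a f) := by
  unfold pd
  exact (hf.fderiv_right (m := (⊤ : ℕ∞)) (by exact_mod_cast le_rfl)).clm_apply contDiff_const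

lemma smooth_diff {f : (Fin n → ℝ) → ℝ} (hf : ContDiff ℝ (⊤ : ℕ∞) f) :
    Differentiable ℝ f := hf.differentiable (by simp)

lemma pd_add {f g : (Fin n → ℝ) → ℝ} (a : Fin n) (x : Fin n → ℝ)
    (hf : DifferentiableAt ℝ f x) (hg : DifferentiableAt ℝ g x) :
    pd a (fun y => f y + g y) x = pd a f x + pd a g x := by
  unfold pd
  rw [fderiv_fun_add hf hg]
  simp

lemma pd_sum {ι : Type*} (s : Finset ι) (F : ι → (Fin n → ℝ) → ℝ) (a : Fin n) (x : Fin n → ℝ)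
    (h : ∀ i ∈ s, DifferentiableAt ℝ (F i) x) :
    pd a (fun y => ∑ i ∈ s, F i y) x = ∑ i ∈ s, pd a (F i) x := by
  unfold pd
  rw [fderiv_fun_sum h]
  simp

lemma pd_mul {f g : (Fin n → ℝ) → ℝ} (a : Fin n) (x : Fin n → ℝ)
    (hf : DifferentiableAt ℝ f x) (hg : DifferentiableAt ℝ g x) :
    pd a (fun y => f y * g y) x = pd a f x * g x + f x * pd a g x := by
  unfold pd
  rw [fderiv_fun_mul hf hg]
  simp [mul_comm]
  ring

lemma pd_const_mul {f : (Fin n → ℝ) → ℝ} (c : ℝ) (a : Fin n) (x : Fin n → ℝ)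
    (hf : DifferentiableAt ℝ f x) :
    pd a (fun y => c * f y) x = c * pd a f x := by
  unfold pd
  rw [fderiv_const_mul hf]
  simp

lemma pd_zero (a : Fin n) : pd a (fun _ : Fin n → ℝ => (0:ℝ)) = fun _ => 0 := by
  funext x
  simp [pd]

lemma pd_comm {f : (Fin n → ℝ) → ℝ} (hf : ContDiff ℝ (⊤ : ℕ∞) f) (a b : Fin n)
    (x : Fin n → ℝ) : pd a (pd b f) x = pd b (pd a f) x := by
  have hsymm : IsSymmSndFDerivAt ℝ f x :=
    hf.contDiffAt.isSymmSndFDerivAt (by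
      rw [show ((2:WithTop ℕ∞)) = ((2:ℕ∞) : WithTop ℕ∞) by rfl]
      simp only [minSmoothness_of_isRCLikeNormedField]
      exact WithTop.coe_le_coe.mpr le_top)
  have hd : DifferentiableAt ℝ (fderiv ℝ f) x :=
    ((hf.fderiv_right (m := (⊤ : ℕ∞)) (by exact_mod_cast le_rfl)).differentiable
      (by simp)).differentiableAt
  have key : ∀ v w : Fin n → ℝ,
      fderiv ℝ (fun y => fderiv ℝ f y v) x w = fderiv ℝ (fderiv ℝ f) x w v := by
    intro v w
    have h2 := fderiv_clm_apply (c := fun y => fderiv ℝ f y) (u := fun _ => v) hd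
      (differentiableAt_const v)
    have : (fun y => fderiv ℝ f y v) = fun y => (fderiv ℝ f y) ((fun _ => v) y) := rfl
    rw [this, h2]
    simp
  show fderiv ℝ (fun y => fderiv ℝ f y (Pi.single b 1)) x (Pi.single a 1)
      = fderiv ℝ (fun y => fderiv ℝ f y (Pi.single a 1)) x (Pi.single b 1)
  rw [key, key]
  exact hsymm _ _

lemma pd_commF {f : (Fin n → ℝ) → ℝ} (hf : ContDiff ℝ (⊤ : ℕ∞) f) (a b : Fin n) :
    pd a (pd b f) = pd b (pd a f) := funext (pd_comm hf a b)

-- permutations of a triple of derivatives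
lemma pd3_swap12 {f : (Fin n → ℝ) → ℝ} (hf : ContDiff ℝ (⊤ : ℕ∞) f) (a b c : Fin n) :
    pd a (pd b (pd c f)) = pd b (pd a (pd c f)) := pd_commF (pd_smooth hf c) a b

lemma pd3_swap23 {f : (Fin n → ℝ) → ℝ} (hf : ContDiff ℝ (⊤ : ℕ∞) f) (a b c : Fin n) :
    pd a (pd b (pd c f)) = pd a (pd c (pd b f)) := by rw [pd_commF hf b c]

lemma pd3_rot {f : (Fin n → ℝ) → ℝ} (hf : ContDiff ℝ (⊤ : ℕ∞) f) (a b c : Fin n) :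
    pd a (pd b (pd c f)) = pd b (pd c (pd a f)) := by
  rw [pd3_swap12 hf, pd3_swap23 hf]

-- pointwise value lemmas for sums with constant coefficients
lemma pd_cmul_sum {ι : Type*} [Fintype ι] (G : ι → ℝ) (F : ι → (Fin n → ℝ) → ℝ)
    (h : ∀ i, ContDiff ℝ (⊤ : ℕ∞) (F i)) (a : Fin n) (x : Fin n → ℝ) :
    pd a (fun y => ∑ i, G i * F i y) x = ∑ i, G i * pd a (F i) x := by
  rw [pd_sum Finset.univ (fun i => fun y => G i * F i y) a x
    (fun i _ => ((smooth_diff (h i)).const_mul (G i)).differentiableAt)]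
  exact Finset.sum_congr rfl fun i _ =>
    pd_const_mul (G i) a x (smooth_diff (h i)).differentiableAt

lemma pd_sum_smooth {ι : Type*} [Fintype ι] (F : ι → (Fin n → ℝ) → ℝ)
    (h : ∀ i, ContDiff ℝ (⊤ : ℕ∞) (F i)) (a : Fin n) (x : Fin n → ℝ) :
    pd a (fun y => ∑ i, F i y) x = ∑ i, pd a (F i) x :=
  pd_sum Finset.univ F a x (fun i _ => (smooth_diff (h i)).differentiableAt)

lemma lap_smooth {G : Matrix (Fin n) (Fin n) ℝ} {f : (Fin n → ℝ) → ℝ}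
    (hf : ContDiff ℝ (⊤ : ℕ∞) f) : ContDiff ℝ (⊤ : ℕ∞) (lap G f) := by
  unfold lap
  exact ContDiff.sum fun a _ => ContDiff.sum fun b _ =>
    contDiff_const.mul (pd_smooth (pd_smooth hf b) a)

lemma pdUp_smooth {G : Matrix (Fin n) (Fin n) ℝ} {f : (Fin n → ℝ) → ℝ}
    (hf : ContDiff ℝ (⊤ : ℕ∞) f) (a : Fin n) : ContDiff ℝ (⊤ : ℕ∞) (pdUp G a f) := by
  unfold pdUp
  exact ContDiff.sum fun b _ => contDiff_const.mul (pd_smooth hf b)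

-- `pd` commutes with `lap`
lemma pd_lap_comm {G : Matrix (Fin n) (Fin n) ℝ} {f : (Fin n → ℝ) → ℝ}
    (hf : ContDiff ℝ (⊤ : ℕ∞) f) (c : Fin n) (x : Fin n → ℝ) :
    pd c (lap G f) x = lap G (pd c f) x := by
  unfold lap
  rw [pd_sum_smooth (fun a => fun y => ∑ b, G a b * pd a (pd b f) y)
    (fun a => ContDiff.sum fun b _ => contDiff_const.mul (pd_smooth (pd_smooth hf b) a)) c x]
  refine Finset.sum_congr rfl fun a _ => ?_
  rw [pd_cmul_sum (fun b => G a b) (fun b => pd a (pd b f))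
    (fun b => pd_smooth (pd_smooth hf b) a) c x]
  refine Finset.sum_congr rfl fun b _ => ?_
  rw [show pd c (pd a (pd b f)) = pd a (pd b (pd c f)) by
    rw [pd3_rot hf c a b]]

end Lemmas

section Killing
variable {n : ℕ}

/-- divergence `u_c = ∂_r k^{rc}` -/
noncomputable def uu (k : Fin n → Fin n → (Fin n → ℝ) → ℝ) (c : Fin n) :
    (Fin n → ℝ) → ℝ := fun x => ∑ r, pd r (k r c) x

/-- trace `g_{bc} k^{bc}` -/
noncomputable def trk (g : Matrix (Fin n) (Fin n) ℝ)
    (k : Fin n → Fin n → (Fin n → ℝ) → ℝ) : (Fin n → ℝ) → ℝ :=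
  fun x => ∑ b, ∑ c, g b c * k b c x

lemma uu_smooth {k : Fin n → Fin n → (Fin n → ℝ) → ℝ}
    (hs : ∀ b c, ContDiff ℝ (⊤ : ℕ∞) (k b c)) (c : Fin n) :
    ContDiff ℝ (⊤ : ℕ∞) (uu k c) :=
  ContDiff.sum fun r _ => pd_smooth (hs r c) r

lemma trk_smooth {g : Matrix (Fin n) (Fin n) ℝ} {k : Fin n → Fin n → (Fin n → ℝ) → ℝ}
    (hs : ∀ b c, ContDiff ℝ (⊤ : ℕ∞) (k b c)) :
    ContDiff ℝ (⊤ : ℕ∞) (trk g k) :=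
  ContDiff.sum fun b _ => ContDiff.sum fun c _ => contDiff_const.mul (hs b c)

/-- `∑_r ∑_s G_{is} ∂_r ∂_s H_r = ∂^i (∑_r ∂_r H_r)` -/
lemma contract_helper (G : Matrix (Fin n) (Fin n) ℝ) (i : Fin n)
    (H : Fin n → (Fin n → ℝ) → ℝ) (hH : ∀ r, ContDiff ℝ (⊤ : ℕ∞) (H r)) (x : Fin n → ℝ) :
    ∑ r, ∑ s, G i s * pd r (pd s (H r)) x = pdUp G i (fun y => ∑ r, pd r (H r) y) x := by
  unfold pdUp
  rw [Finset.sum_comm]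
  refine Finset.sum_congr rfl fun s _ => ?_
  rw [pd_sum_smooth (fun r => pd r (H r)) (fun r => pd_smooth (hH r) r) s x,
    Finset.mul_sum]
  exact Finset.sum_congr rfl fun r _ => by rw [pd_comm (hH r) r s]

/-- E1: `Δ k_{bc} + ∂^b u_c + ∂^c u_b = 0` -/
lemma killing_E1 {ginv : Matrix (Fin n) (Fin n) ℝ} {k : Fin n → Fin n → (Fin n → ℝ) → ℝ}
    (hs : ∀ b c, ContDiff ℝ (⊤ : ℕ∞) (k b c))
    (hsymk : ∀ b c, k b c = k c b)
    (hkill : ∀ (a b c : Fin n) (x : Fin n → ℝ),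
      pdUp ginv a (k b c) x + pdUp ginv b (k c a) x + pdUp ginv c (k a b) x = 0)
    (b c : Fin n) (x : Fin n → ℝ) :
    lap ginv (k b c) x + pdUp ginv b (uu k c) x + pdUp ginv c (uu k b) x = 0 := by
  have h0 : ∀ r : Fin n,
      pd r (fun y => pdUp ginv r (k b c) y + pdUp ginv b (k c r) y + pdUp ginv c (k r b) y) x
        = 0 := by
    intro r
    rw [show (fun y => pdUp ginv r (k b c) y + pdUp ginv b (k c r) y + pdUp ginv c (k r b) y)
        = (fun _ => (0:ℝ)) from funext fun y => hkill r b c y]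
    simp [pd]
  have hexp : ∀ r : Fin n,
      pd r (fun y => pdUp ginv r (k b c) y + pdUp ginv b (k c r) y + pdUp ginv c (k r b) y) x
      = pd r (pdUp ginv r (k b c)) x + pd r (pdUp ginv b (k c r)) x
          + pd r (pdUp ginv c (k r b)) x := by
    intro r
    rw [pd_add r x (((pdUp_smooth (hs b c) r).add (pdUp_smooth (hs c r) b)).differentiable
        (by simp)).differentiableAt
      ((pdUp_smooth (hs r b) c).differentiable (by simp)).differentiableAt,
      pd_add r x ((pdUp_smooth (hs b c) r).differentiable
        (by simp)).differentiableAt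
      ((pdUp_smooth (hs c r) b).differentiable (by simp)).differentiableAt]
  have hsum : (∑ r, (pd r (pdUp ginv r (k b c)) x + pd r (pdUp ginv b (k c r)) x
      + pd r (pdUp ginv c (k r b)) x)) = 0 := by
    rw [← Finset.sum_congr rfl fun r _ => hexp r]
    simp [h0]
  rw [Finset.sum_add_distrib, Finset.sum_add_distrib] at hsum
  -- identify the three sums
  have hT1 : (∑ r, pd r (pdUp ginv r (k b c)) x) = lap ginv (k b c) x := by
    unfold lap
    refine Finset.sum_congr rfl fun r _ => ?_
    unfold pdUp
    rw [pd_cmul_sum (fun s => ginv r s) (fun s => pd s (k b c))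
      (fun s => pd_smooth (hs b c) s) r x]
  have hT2 : (∑ r, pd r (pdUp ginv b (k c r)) x) = pdUp ginv b (uu k c) x := by
    have : ∀ r, pd r (pdUp ginv b (k c r)) x = ∑ s, ginv b s * pd r (pd s (k c r)) x := by
      intro r
      unfold pdUp
      rw [pd_cmul_sum (fun s => ginv b s) (fun s => pd s (k c r))
        (fun s => pd_smooth (hs c r) s) r x]
    rw [Finset.sum_congr rfl fun r _ => this r]
    have := contract_helper ginv b (fun r => k r c) (fun r => hs r c) x
    rw [show uu k c = fun y => ∑ r, pd r (k r c) y from rfl, ← this]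
    exact Finset.sum_congr rfl fun r _ => Finset.sum_congr rfl fun s _ => by
      rw [hsymk c r]
  have hT3 : (∑ r, pd r (pdUp ginv c (k r b)) x) = pdUp ginv c (uu k b) x := by
    have : ∀ r, pd r (pdUp ginv c (k r b)) x = ∑ s, ginv c s * pd r (pd s (k r b)) x := by
      intro r
      unfold pdUp
      rw [pd_cmul_sum (fun s => ginv c s) (fun s => pd s (k r b))
        (fun s => pd_smooth (hs r b) s) r x]
    rw [Finset.sum_congr rfl fun r _ => this r]
    exact contract_helper ginv c (fun r => k r b) (fun r => hs r b) x
  rw [hT1, hT2, hT3] at hsum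
  exact hsum

end Killing

section Killing2
variable {n : ℕ}

lemma sum_rot3 {M : Type*} [AddCommMonoid M] {ι : Type*} [Fintype ι]
    (F : ι → ι → ι → M) :
    ∑ b, ∑ c, ∑ r, F b c r = ∑ r, ∑ b, ∑ c, F b c r := by
  calc ∑ b, ∑ c, ∑ r, F b c r = ∑ b, ∑ r, ∑ c, F b c r :=
        Finset.sum_congr rfl fun b _ => Finset.sum_comm
    _ = ∑ r, ∑ b, ∑ c, F b c r := Finset.sum_comm

/-- ∂_r of the trace -/
lemma pd_trk {g : Matrix (Fin n) (Fin n) ℝ} {k : Fin n → Fin n → (Fin n → ℝ) → ℝ}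
    (hs : ∀ b c, ContDiff ℝ (⊤ : ℕ∞) (k b c)) (r : Fin n) (x : Fin n → ℝ) :
    pd r (trk g k) x = ∑ b, ∑ c, g b c * pd r (k b c) x := by
  unfold trk
  rw [pd_sum_smooth (fun b => fun y => ∑ c, g b c * k b c y)
    (fun b => ContDiff.sum fun c _ => contDiff_const.mul (hs b c)) r x]
  exact Finset.sum_congr rfl fun b _ =>
    pd_cmul_sum (fun c => g b c) (fun c => k b c) (fun c => hs b c) r x

/-- E3: `2 u_a + ∂^a (tr k) = 0` -/
lemma killing_E3 {g ginv : Matrix (Fin n) (Fin n) ℝ} {k : Fin n → Fin n → (Fin n → ℝ) → ℝ}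
    (hgsym : g.IsSymm) (hginv : g * ginv = 1)
    (hs : ∀ b c, ContDiff ℝ (⊤ : ℕ∞) (k b c))
    (hsymk : ∀ b c, k b c = k c b)
    (hkill : ∀ (a b c : Fin n) (x : Fin n → ℝ),
      pdUp ginv a (k b c) x + pdUp ginv b (k c a) x + pdUp ginv c (k a b) x = 0)
    (a : Fin n) (x : Fin n → ℝ) :
    2 * uu k a x + pdUp ginv a (trk g k) x = 0 := by
  have h0 : (∑ b, ∑ c, g b c * (pdUp ginv a (k b c) x + pdUp ginv b (k c a) x
      + pdUp ginv c (k a b) x)) = 0 := by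
    simp only [hkill, mul_zero, Finset.sum_const_zero]
  have hsplit : (∑ b, ∑ c, g b c * (pdUp ginv a (k b c) x + pdUp ginv b (k c a) x
      + pdUp ginv c (k a b) x))
      = (∑ b, ∑ c, g b c * pdUp ginv a (k b c) x)
        + (∑ b, ∑ c, g b c * pdUp ginv b (k c a) x)
        + (∑ b, ∑ c, g b c * pdUp ginv c (k a b) x) := by
    simp only [mul_add, Finset.sum_add_distrib]
  have hTA : (∑ b, ∑ c, g b c * pdUp ginv a (k b c) x) = pdUp ginv a (trk g k) x := by
    unfold pdUp
    have : ∀ r, ginv a r * pd r (trk g k) x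
        = ∑ b, ∑ c, ginv a r * (g b c * pd r (k b c) x) := by
      intro r
      rw [pd_trk hs r x, Finset.mul_sum]
      exact Finset.sum_congr rfl fun b _ => by rw [Finset.mul_sum]
    rw [Finset.sum_congr rfl fun r _ => this r, ← sum_rot3 (fun b c r => ginv a r * (g b c * pd r (k b c) x))]
    refine Finset.sum_congr rfl fun b _ => Finset.sum_congr rfl fun c _ => ?_
    rw [Finset.mul_sum]
    exact Finset.sum_congr rfl fun r _ => by ring
  have hid : ∀ c s : Fin n, (∑ b, g b c * ginv b s) = if c = s then 1 else 0 := by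
    intro c s
    have : (∑ b, g c b * ginv b s) = (g * ginv) c s := by rw [Matrix.mul_apply]
    rw [Finset.sum_congr rfl fun b _ => by rw [← hgsym.apply b c], this, hginv,
      Matrix.one_apply]
  have hTB : (∑ b, ∑ c, g b c * pdUp ginv b (k c a) x) = uu k a x := by
    unfold pdUp
    have h1 : (∑ b, ∑ c, g b c * ∑ s, ginv b s * pd s (k c a) x)
        = ∑ c, ∑ s, (∑ b, g b c * ginv b s) * pd s (k c a) x := by
      conv_lhs => rw [Finset.sum_comm]
      refine Finset.sum_congr rfl fun c _ => ?_
      simp only [Finset.mul_sum, Finset.sum_mul]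
      rw [Finset.sum_comm]
      exact Finset.sum_congr rfl fun s _ => Finset.sum_congr rfl fun b _ => by ring
    rw [h1, Finset.sum_congr rfl fun c _ => Finset.sum_congr rfl fun s _ => by rw [hid c s]]
    simp only [ite_mul, one_mul, zero_mul, Finset.sum_ite_eq, Finset.mem_univ, if_true]
    rfl
  have hid2 : ∀ b s : Fin n, (∑ c, g b c * ginv c s) = if b = s then 1 else 0 := by
    intro b s
    rw [show (∑ c, g b c * ginv c s) = (g * ginv) b s from (Matrix.mul_apply).symm, hginv,
      Matrix.one_apply]
  have hTC : (∑ b, ∑ c, g b c * pdUp ginv c (k a b) x) = uu k a x := by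
    unfold pdUp
    have h1 : (∑ b, ∑ c, g b c * ∑ s, ginv c s * pd s (k a b) x)
        = ∑ b, ∑ s, (∑ c, g b c * ginv c s) * pd s (k a b) x := by
      refine Finset.sum_congr rfl fun b _ => ?_
      simp only [Finset.mul_sum, Finset.sum_mul]
      rw [Finset.sum_comm]
      exact Finset.sum_congr rfl fun s _ => Finset.sum_congr rfl fun c _ => by ring
    rw [h1, Finset.sum_congr rfl fun b _ => Finset.sum_congr rfl fun s _ => by rw [hid2 b s]]
    simp only [ite_mul, one_mul, zero_mul, Finset.sum_ite_eq, Finset.mem_univ, if_true]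
    unfold uu
    exact Finset.sum_congr rfl fun b _ => by rw [hsymk a b]
  rw [hsplit, hTA, hTB, hTC] at h0
  linarith

end Killing2

section Killing3
variable {n : ℕ}

lemma sum_rot3' {M : Type*} [AddCommMonoid M] {α β γ : Type*} [Fintype α] [Fintype β]
    [Fintype γ] (F : α → β → γ → M) :
    ∑ b, ∑ c, ∑ r, F b c r = ∑ r, ∑ b, ∑ c, F b c r := by
  calc ∑ b, ∑ c, ∑ r, F b c r = ∑ b, ∑ r, ∑ c, F b c r :=
        Finset.sum_congr rfl fun b _ => Finset.sum_comm
    _ = ∑ r, ∑ b, ∑ c, F b c r := Finset.sum_comm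

lemma pd3_rot2 {f : (Fin n → ℝ) → ℝ} (hf : ContDiff ℝ (⊤ : ℕ∞) f) (a b c : Fin n) :
    pd a (pd b (pd c f)) = pd c (pd a (pd b f)) := by
  rw [pd3_rot hf a b c, pd3_rot hf b c a]

lemma pdF_cmul_sum {ι : Type*} [Fintype ι] (G : ι → ℝ) (F : ι → (Fin n → ℝ) → ℝ)
    (h : ∀ i, ContDiff ℝ (⊤ : ℕ∞) (F i)) (a : Fin n) :
    pd a (fun y => ∑ i, G i * F i y) = fun x => ∑ i, G i * pd a (F i) x :=
  funext (pd_cmul_sum G F h a)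

lemma pdF_sum_smooth {ι : Type*} [Fintype ι] (F : ι → (Fin n → ℝ) → ℝ)
    (h : ∀ i, ContDiff ℝ (⊤ : ℕ∞) (F i)) (a : Fin n) :
    pd a (fun y => ∑ i, F i y) = fun x => ∑ i, pd a (F i) x :=
  funext (pd_sum_smooth F h a)

lemma pdF_const_mul {f : (Fin n → ℝ) → ℝ} (c : ℝ) (a : Fin n)
    (hf : ContDiff ℝ (⊤ : ℕ∞) f) :
    pd a (fun y => c * f y) = fun x => c * pd a f x :=
  funext fun x => pd_const_mul c a x (smooth_diff hf).differentiableAt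

lemma lap_const_mul {G : Matrix (Fin n) (Fin n) ℝ} {f : (Fin n → ℝ) → ℝ} (c : ℝ)
    (hf : ContDiff ℝ (⊤ : ℕ∞) f) (x : Fin n → ℝ) :
    lap G (fun y => c * f y) x = c * lap G f x := by
  unfold lap
  rw [Finset.mul_sum]
  refine Finset.sum_congr rfl fun a _ => ?_
  rw [Finset.mul_sum]
  refine Finset.sum_congr rfl fun b _ => ?_
  rw [pdF_const_mul c b hf, pdF_const_mul c a (pd_smooth hf b)]
  ring

lemma lap_cmul_sum {ι : Type*} [Fintype ι] {G : Matrix (Fin n) (Fin n) ℝ} (C : ι → ℝ)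
    (F : ι → (Fin n → ℝ) → ℝ) (h : ∀ i, ContDiff ℝ (⊤ : ℕ∞) (F i)) (x : Fin n → ℝ) :
    lap G (fun y => ∑ i, C i * F i y) x = ∑ i, C i * lap G (F i) x := by
  unfold lap
  have hstep : ∀ a b : Fin n, pd a (pd b (fun y => ∑ i, C i * F i y)) x
      = ∑ i, C i * pd a (pd b (F i)) x := by
    intro a b
    rw [pdF_cmul_sum C F h b, pd_cmul_sum C (fun i => pd b (F i))
      (fun i => pd_smooth (h i) b) a x]
  calc (∑ a, ∑ b, G a b * pd a (pd b fun y => ∑ i, C i * F i y) x)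
      = ∑ a, ∑ b, ∑ i, C i * (G a b * pd a (pd b (F i)) x) := by
        refine Finset.sum_congr rfl fun a _ => Finset.sum_congr rfl fun b _ => ?_
        rw [hstep a b, Finset.mul_sum]
        exact Finset.sum_congr rfl fun i _ => by ring
    _ = ∑ i, ∑ a, ∑ b, C i * (G a b * pd a (pd b (F i)) x) := sum_rot3' _
    _ = ∑ i, C i * lap G (F i) x := by
        refine Finset.sum_congr rfl fun i _ => ?_
        unfold lap
        rw [Finset.mul_sum]
        exact Finset.sum_congr rfl fun a _ => by rw [Finset.mul_sum]

end Killing3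

section Killing4
variable {n : ℕ}

/-- E2: `Δ u_c = 0` for a Killing tensor. -/
lemma killing_E2 {g ginv : Matrix (Fin n) (Fin n) ℝ} {k : Fin n → Fin n → (Fin n → ℝ) → ℝ}
    (hgsym : g.IsSymm) (hginv : g * ginv = 1)
    (hs : ∀ b c, ContDiff ℝ (⊤ : ℕ∞) (k b c))
    (hsymk : ∀ b c, k b c = k c b)
    (hkill : ∀ (a b c : Fin n) (x : Fin n → ℝ),
      pdUp ginv a (k b c) x + pdUp ginv b (k c a) x + pdUp ginv c (k a b) x = 0)
    (c : Fin n) (x : Fin n → ℝ) :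
    lap ginv (uu k c) x = 0 := by
  -- u in terms of the trace
  have huu : ∀ a, uu k a = fun y => -(1/2) * pdUp ginv a (trk g k) y := by
    intro a
    funext y
    have := killing_E3 hgsym hginv hs hsymk hkill a y
    unfold uu at this ⊢
    linarith
  have htr : ContDiff ℝ (⊤ : ℕ∞) (trk g k) := trk_smooth hs
  -- Δu_c expressed through the trace
  have hlapu : ∀ i, lap ginv (uu k i) x
      = -(1/2) * ∑ s, ginv i s * pd s (lap ginv (trk g k)) x := by
    intro i
    rw [huu i, lap_const_mul _ (pdUp_smooth htr i) x,
      show pdUp ginv i (trk g k) = fun y => ∑ s, ginv i s * pd s (trk g k) y from rfl,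
      lap_cmul_sum (fun s => ginv i s) (fun s => pd s (trk g k))
        (fun s => pd_smooth htr s) x]
    congr 1
    exact Finset.sum_congr rfl fun s _ => by rw [← pd_lap_comm htr s x]
  -- divergence of u
  have hw : (fun y => ∑ a, pd a (uu k a) y) = fun y => -(1/2) * lap ginv (trk g k) y := by
    funext y
    have : ∀ a : Fin n, pd a (uu k a) y = -(1/2) * ∑ s, ginv a s * pd a (pd s (trk g k)) y := by
      intro a
      rw [huu a, pdF_const_mul _ a (pdUp_smooth htr a),
        show pdUp ginv a (trk g k) = fun z => ∑ s, ginv a s * pd s (trk g k) z from rfl,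
        pdF_cmul_sum (fun s => ginv a s) (fun s => pd s (trk g k))
          (fun s => pd_smooth htr s) a]
    rw [Finset.sum_congr rfl fun a _ => this a, ← Finset.mul_sum]
    rfl
  -- the double–derivative contraction of the Killing equation
  have hzero : ∀ a b : Fin n, pd a (pd b (fun y => pdUp ginv a (k b c) y
      + pdUp ginv b (k c a) y + pdUp ginv c (k a b) y)) x = 0 := by
    intro a b
    rw [show (fun y => pdUp ginv a (k b c) y + pdUp ginv b (k c a) y + pdUp ginv c (k a b) y)
        = (fun _ => (0:ℝ)) from funext fun y => hkill a b c y, pd_zero]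
    simp [pd]
  have hsplit : ∀ a b : Fin n, pd a (pd b (fun y => pdUp ginv a (k b c) y
      + pdUp ginv b (k c a) y + pdUp ginv c (k a b) y)) x
      = pd a (pd b (pdUp ginv a (k b c))) x + pd a (pd b (pdUp ginv b (k c a))) x
        + pd a (pd b (pdUp ginv c (k a b))) x := by
    intro a b
    have hfb : pd b (fun y => pdUp ginv a (k b c) y + pdUp ginv b (k c a) y
        + pdUp ginv c (k a b) y)
        = fun y => (pd b (pdUp ginv a (k b c)) y + pd b (pdUp ginv b (k c a)) y)
          + pd b (pdUp ginv c (k a b)) y := by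
      funext y
      rw [show (fun z => pdUp ginv a (k b c) z + pdUp ginv b (k c a) z + pdUp ginv c (k a b) z)
          = (fun z => (pdUp ginv a (k b c) z + pdUp ginv b (k c a) z) + pdUp ginv c (k a b) z)
          from rfl,
        pd_add b y (((pdUp_smooth (hs b c) a).add (pdUp_smooth (hs c a) b)).differentiable
          (by simp)).differentiableAt
          ((pdUp_smooth (hs a b) c).differentiable (by simp)).differentiableAt,
        pd_add b y ((pdUp_smooth (hs b c) a).differentiable
          (by simp)).differentiableAt
          ((pdUp_smooth (hs c a) b).differentiable (by simp)).differentiableAt]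
    rw [hfb,
      pd_add a x (((pd_smooth (pdUp_smooth (hs b c) a) b).add
          (pd_smooth (pdUp_smooth (hs c a) b) b)).differentiable
          (by simp)).differentiableAt
        ((pd_smooth (pdUp_smooth (hs a b) c) b).differentiable
          (by simp)).differentiableAt,
      pd_add a x ((pd_smooth (pdUp_smooth (hs b c) a) b).differentiable
          (by simp)).differentiableAt
        ((pd_smooth (pdUp_smooth (hs c a) b) b).differentiable
          (by simp)).differentiableAt]
  -- expansion of the double derivative of pdUp
  have hexp2 : ∀ (i : Fin n) (h : (Fin n → ℝ) → ℝ), ContDiff ℝ (⊤ : ℕ∞) h →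
      ∀ a b : Fin n, pd a (pd b (pdUp ginv i h)) x
        = ∑ s, ginv i s * pd a (pd b (pd s h)) x := by
    intro i h hh a b
    rw [show pdUp ginv i h = fun y => ∑ s, ginv i s * pd s h y from rfl,
      pdF_cmul_sum (fun s => ginv i s) (fun s => pd s h) (fun s => pd_smooth hh s) b,
      pd_cmul_sum (fun s => ginv i s) (fun s => pd b (pd s h))
        (fun s => pd_smooth (pd_smooth hh s) b) a x]
  have hmain : (∑ a : Fin n, ∑ b : Fin n,
      ((∑ s, ginv a s * pd a (pd b (pd s (k b c))) x)
      + ((∑ s, ginv b s * pd a (pd b (pd s (k c a))) x)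
      + (∑ s, ginv c s * pd a (pd b (pd s (k a b))) x)))) = 0 := by
    rw [show (0:ℝ) = ∑ a : Fin n, ∑ b : Fin n, (0:ℝ) by simp]
    refine Finset.sum_congr rfl fun a _ => Finset.sum_congr rfl fun b _ => ?_
    rw [← hexp2 a (k b c) (hs b c) a b, ← hexp2 b (k c a) (hs c a) a b,
      ← hexp2 c (k a b) (hs a b) a b, ← add_assoc, ← hsplit a b, hzero a b]
  simp only [Finset.sum_add_distrib] at hmain
  -- first sum is Δu_c
  have hS1 : (∑ a : Fin n, ∑ b : Fin n, ∑ s, ginv a s * pd a (pd b (pd s (k b c))) x)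
      = lap ginv (uu k c) x := by
    have e1 : ∀ a : Fin n, (∑ b : Fin n, ∑ s, ginv a s * pd a (pd b (pd s (k b c))) x)
        = ∑ s, ∑ b : Fin n, ginv a s * pd a (pd s (pd b (k b c))) x := by
      intro a
      rw [Finset.sum_comm]
      exact Finset.sum_congr rfl fun s _ => Finset.sum_congr rfl fun b _ => by
        rw [pd3_swap23 (hs b c) a b s]
    rw [Finset.sum_congr rfl fun a _ => e1 a]
    unfold lap uu
    refine Finset.sum_congr rfl fun a _ => Finset.sum_congr rfl fun s _ => ?_
    rw [pdF_sum_smooth (fun r => pd r (k r c)) (fun r => pd_smooth (hs r c) r) s,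
      pd_sum_smooth (fun r => pd s (pd r (k r c))) (fun r => pd_smooth (pd_smooth (hs r c) r) s)
        a x, Finset.mul_sum]
  -- second sum is Δu_c as well
  have hS2 : (∑ a : Fin n, ∑ b : Fin n, ∑ s, ginv b s * pd a (pd b (pd s (k c a))) x)
      = lap ginv (uu k c) x := by
    have e1 : ∀ (a b s : Fin n), pd a (pd b (pd s (k c a))) = pd b (pd s (pd a (k a c))) := by
      intro a b s
      rw [hsymk c a, pd3_rot (hs a c) a b s]
    rw [Finset.sum_congr rfl fun a _ => Finset.sum_congr rfl fun b _ =>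
      Finset.sum_congr rfl fun s _ => by rw [e1 a b s],
      ← sum_rot3' (fun b s a => ginv b s * pd b (pd s (pd a (k a c))) x)]
    unfold lap uu
    refine Finset.sum_congr rfl fun b _ => Finset.sum_congr rfl fun s _ => ?_
    rw [pdF_sum_smooth (fun r => pd r (k r c)) (fun r => pd_smooth (hs r c) r) s,
      pd_sum_smooth (fun r => pd s (pd r (k r c))) (fun r => pd_smooth (pd_smooth (hs r c) r) s)
        b x, Finset.mul_sum]
  -- third sum is Δu_c via the trace
  have hS3 : (∑ a : Fin n, ∑ b : Fin n, ∑ s, ginv c s * pd a (pd b (pd s (k a b))) x)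
      = lap ginv (uu k c) x := by
    rw [Finset.sum_congr rfl fun a _ => Finset.sum_congr rfl fun b _ =>
      Finset.sum_congr rfl fun s _ => by rw [pd3_rot2 (hs a b) a b s],
      sum_rot3' (fun a b s => ginv c s * pd s (pd a (pd b (k a b))) x)]
    have e2 : ∀ s, (∑ a : Fin n, ∑ b : Fin n, ginv c s * pd s (pd a (pd b (k a b))) x)
        = ginv c s * ∑ a : Fin n, ∑ b : Fin n, pd s (pd a (pd b (k b a))) x := by
      intro s
      rw [Finset.mul_sum]
      rw [Finset.sum_comm]
      refine Finset.sum_congr rfl fun X _ => ?_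
      rw [Finset.mul_sum]
      exact Finset.sum_congr rfl fun Y _ => by rw [pd_commF (hs Y X) Y X]
    rw [Finset.sum_congr rfl fun s _ => e2 s]
    have e3 : ∀ s, (∑ a : Fin n, ∑ b : Fin n, pd s (pd a (pd b (k b a))) x)
        = pd s (fun y => ∑ a, pd a (uu k a) y) x := by
      intro s
      rw [pd_sum_smooth (fun a => pd a (uu k a)) (fun a => pd_smooth (uu_smooth hs a) a) s x]
      refine Finset.sum_congr rfl fun a _ => ?_
      have : pd a (uu k a) = fun y => ∑ b, pd a (pd b (k b a)) y := by
        unfold uu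
        exact pdF_sum_smooth (fun r => pd r (k r a)) (fun r => pd_smooth (hs r a) r) a
      rw [this, pd_sum_smooth (fun b => pd a (pd b (k b a)))
        (fun b => pd_smooth (pd_smooth (hs b a) b) a) s x]
    rw [Finset.sum_congr rfl fun s _ => by rw [e3 s], hlapu c]
    have e4 : ∀ s, pd s (fun y => ∑ a, pd a (uu k a) y) x
        = -(1/2) * pd s (lap ginv (trk g k)) x := by
      intro s
      rw [hw]
      exact pd_const_mul _ s x (smooth_diff (lap_smooth htr)).differentiableAt
    rw [Finset.sum_congr rfl fun s _ => by rw [e4 s], Finset.mul_sum]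
    exact Finset.sum_congr rfl fun s _ => by ring
  rw [hS1, hS2, hS3] at hmain
  linarith

end Killing4

section Killing5
variable {n : ℕ}

lemma third_order {ginv : Matrix (Fin n) (Fin n) ℝ} {k : Fin n → Fin n → (Fin n → ℝ) → ℝ}
    (hkill : ∀ (a b c : Fin n) (x : Fin n → ℝ),
      pdUp ginv a (k b c) x + pdUp ginv b (k c a) x + pdUp ginv c (k a b) x = 0)
    (f : (Fin n → ℝ) → ℝ) (hf : ContDiff ℝ (⊤ : ℕ∞) f) (x : Fin n → ℝ) :
    (∑ b, ∑ c, ∑ d, pdUp ginv b (k c d) x * pd b (pd c (pd d f)) x) = 0 := by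
  have hrot : ∀ a b c : Fin n, pd a (pd b (pd c f)) x = pd b (pd c (pd a f)) x :=
    fun a b c => congrFun (pd3_rot hf a b c) x
  have h3 : (∑ b : Fin n, ∑ c : Fin n, ∑ d : Fin n,
      (pdUp ginv b (k c d) x + pdUp ginv c (k d b) x + pdUp ginv d (k b c) x)
        * pd b (pd c (pd d f)) x) = 0 := by
    simp only [hkill, zero_mul, Finset.sum_const_zero]
  simp only [add_mul, Finset.sum_add_distrib] at h3
  have hT2 : (∑ b : Fin n, ∑ c : Fin n, ∑ d : Fin n,
      pdUp ginv c (k d b) x * pd b (pd c (pd d f)) x)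
      = ∑ b, ∑ c, ∑ d, pdUp ginv b (k c d) x * pd b (pd c (pd d f)) x := by
    calc (∑ b : Fin n, ∑ c : Fin n, ∑ d : Fin n,
        pdUp ginv c (k d b) x * pd b (pd c (pd d f)) x)
        = ∑ b : Fin n, ∑ c : Fin n, ∑ d : Fin n,
          pdUp ginv b (k c d) x * pd d (pd b (pd c f)) x := (sum_rot3' _).symm
      _ = ∑ b, ∑ c, ∑ d, pdUp ginv b (k c d) x * pd b (pd c (pd d f)) x := by
          exact Finset.sum_congr rfl fun b _ => Finset.sum_congr rfl fun c _ =>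
            Finset.sum_congr rfl fun d _ => by rw [hrot d b c]
  have hT3 : (∑ b : Fin n, ∑ c : Fin n, ∑ d : Fin n,
      pdUp ginv d (k b c) x * pd b (pd c (pd d f)) x)
      = ∑ b, ∑ c, ∑ d, pdUp ginv b (k c d) x * pd b (pd c (pd d f)) x := by
    calc (∑ b : Fin n, ∑ c : Fin n, ∑ d : Fin n,
        pdUp ginv d (k b c) x * pd b (pd c (pd d f)) x)
        = ∑ b : Fin n, ∑ c : Fin n, ∑ d : Fin n,
          pdUp ginv b (k c d) x * pd c (pd d (pd b f)) x := sum_rot3' _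
      _ = ∑ b, ∑ c, ∑ d, pdUp ginv b (k c d) x * pd b (pd c (pd d f)) x := by
          refine Finset.sum_congr rfl fun b _ => Finset.sum_congr rfl fun c _ =>
            Finset.sum_congr rfl fun d _ => ?_
          rw [hrot c d b, hrot d b c]
  rw [hT2, hT3] at h3
  linarith

end Killing5

section Assembly
open Matrix
variable {n : ℕ}

lemma ginv_symm {g ginv : Matrix (Fin n) (Fin n) ℝ} (hgsym : g.IsSymm)
    (hginv : g * ginv = 1) (i j : Fin n) : ginv i j = ginv j i := by
  have ht : ginvᵀ * gᵀ = 1 := by rw [← Matrix.transpose_mul, hginv, Matrix.transpose_one]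
  have h : ginvᵀ = ginv := by
    calc ginvᵀ = ginvᵀ * (g * ginv) := by rw [hginv, Matrix.mul_one]
      _ = (ginvᵀ * gᵀ) * ginv := by rw [hgsym.eq, Matrix.mul_assoc]
      _ = ginv := by rw [ht, Matrix.one_mul]
  conv_lhs => rw [← h]
  exact Matrix.transpose_apply ginv i j

lemma sum_rot3'' {M : Type*} [AddCommMonoid M] {α β γ : Type*} [Fintype α] [Fintype β]
    [Fintype γ] (F : α → β → γ → M) :
    ∑ b, ∑ c, ∑ d, F b c d = ∑ c, ∑ d, ∑ b, F b c d := by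
  calc ∑ b, ∑ c, ∑ d, F b c d = ∑ c, ∑ b, ∑ d, F b c d := Finset.sum_comm
    _ = ∑ c, ∑ d, ∑ b, F b c d := Finset.sum_congr rfl fun c _ => Finset.sum_comm

lemma sum_swap_pairs {M : Type*} [AddCommMonoid M] {α β γ δ : Type*} [Fintype α] [Fintype β]
    [Fintype γ] [Fintype δ] (F : α → β → γ → δ → M) :
    ∑ a, ∑ b, ∑ c, ∑ d, F a b c d = ∑ c, ∑ d, ∑ a, ∑ b, F a b c d := by
  calc ∑ a, ∑ b, ∑ c, ∑ d, F a b c d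
      = ∑ a, ∑ c, ∑ d, ∑ b, F a b c d :=
        Finset.sum_congr rfl fun a _ => sum_rot3'' _
    _ = ∑ c, ∑ a, ∑ d, ∑ b, F a b c d := Finset.sum_comm
    _ = ∑ c, ∑ d, ∑ a, ∑ b, F a b c d :=
        Finset.sum_congr rfl fun c _ => Finset.sum_comm

end Assembly

/-- for a Killing 2-tensor `k` on `ℝⁿ`, the second order operator
`D f = k^{bc} ∂_b ∂_c f + (∂_r k^{rc}) ∂_c f` commutes with the Laplacian. -/
theorem stmt9 {n : ℕ} (hn : 0 < n)
    (g ginv : Matrix (Fin n) (Fin n) ℝ) (hgsym : g.IsSymm) (hginv : g * ginv = 1)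
    (k : Fin n → Fin n → (Fin n → ℝ) → ℝ)
    (hsmooth : ∀ b c, ContDiff ℝ (⊤ : ℕ∞) (k b c))
    (hsymk : ∀ b c, k b c = k c b)
    (hkill : ∀ (a b c : Fin n) (x : Fin n → ℝ),
      pdUp ginv a (k b c) x + pdUp ginv b (k c a) x + pdUp ginv c (k a b) x = 0)
    (D : ((Fin n → ℝ) → ℝ) → ((Fin n → ℝ) → ℝ))
    (hD : ∀ f x, D f x =
      (∑ b, ∑ c, k b c x * pd b (pd c f) x) +
        ∑ c, (∑ r, pd r (k r c) x) * pd c f x) :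
    ∀ f, ContDiff ℝ (⊤ : ℕ∞) f → ∀ x, lap ginv (D f) x = D (lap ginv f) x := by
  intro f hf x
  have hGsym : ∀ i j, ginv i j = ginv j i := ginv_symm hgsym hginv
  have dAt : ∀ {h : (Fin n → ℝ) → ℝ}, ContDiff ℝ (⊤ : ℕ∞) h →
      ∀ y, DifferentiableAt ℝ h y := fun hh y => (smooth_diff hh).differentiableAt
  have hu : ∀ c, ContDiff ℝ (⊤ : ℕ∞) (uu k c) := uu_smooth hsmooth
  have h2f : ∀ c d, ContDiff ℝ (⊤ : ℕ∞) (pd c (pd d f)) :=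
    fun c d => pd_smooth (pd_smooth hf d) c
  have h3f : ∀ b c d, ContDiff ℝ (⊤ : ℕ∞) (pd b (pd c (pd d f))) :=
    fun b c d => pd_smooth (h2f c d) b
  have hkd : ∀ b c d, ContDiff ℝ (⊤ : ℕ∞) (pd b (k c d)) := fun b c d => pd_smooth (hsmooth c d) b
  have hud : ∀ b c, ContDiff ℝ (⊤ : ℕ∞) (pd b (uu k c)) := fun b c => pd_smooth (hu c) b
  have h1f : ∀ c, ContDiff ℝ (⊤ : ℕ∞) (pd c f) := fun c => pd_smooth hf c
  -- D f as an explicit function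
  have hDfun : D f = fun y => (∑ b, ∑ c, k b c y * pd b (pd c f) y)
      + ∑ c, uu k c y * pd c f y := funext fun y => hD f y
  have hP : ∀ c d : Fin n, ContDiff ℝ (⊤ : ℕ∞) (fun y => k c d y * pd c (pd d f) y) :=
    fun c d => (hsmooth c d).mul (h2f c d)
  have hPsum : ContDiff ℝ (⊤ : ℕ∞) (fun y => ∑ b, ∑ c, k b c y * pd b (pd c f) y) :=
    ContDiff.sum fun b _ => ContDiff.sum fun c _ => hP b c
  have hQ : ∀ c, ContDiff ℝ (⊤ : ℕ∞) (fun y => uu k c y * pd c f y) :=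
    fun c => (hu c).mul (h1f c)
  have hQsum : ContDiff ℝ (⊤ : ℕ∞) (fun y => ∑ c, uu k c y * pd c f y) :=
    ContDiff.sum fun c _ => hQ c
  -- first derivative of D f
  have hpdD : ∀ b : Fin n, pd b (D f) = fun y =>
      (∑ c, ∑ d, (pd b (k c d) y * pd c (pd d f) y + k c d y * pd b (pd c (pd d f)) y))
      + ∑ c, (pd b (uu k c) y * pd c f y + uu k c y * pd b (pd c f) y) := by
    intro b
    rw [hDfun]
    funext y
    rw [pd_add b y (dAt hPsum y) (dAt hQsum y)]
    congr 1
    · rw [pd_sum_smooth (fun c => fun y => ∑ d, k c d y * pd c (pd d f) y)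
        (fun c => ContDiff.sum fun d _ => hP c d) b y]
      refine Finset.sum_congr rfl fun c _ => ?_
      rw [pd_sum_smooth (fun d => fun y => k c d y * pd c (pd d f) y)
        (fun d => hP c d) b y]
      exact Finset.sum_congr rfl fun d _ =>
        pd_mul b y (dAt (hsmooth c d) y) (dAt (h2f c d) y)
    · rw [pd_sum_smooth (fun c => fun y => uu k c y * pd c f y) hQ b y]
      exact Finset.sum_congr rfl fun c _ =>
        pd_mul b y (dAt (hu c) y) (dAt (h1f c) y)
  -- second derivative of D f, pointwise
  have hpd2D : ∀ a b : Fin n, pd a (pd b (D f)) x =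
      (∑ c, ∑ d, ((pd a (pd b (k c d)) x * pd c (pd d f) x
        + pd b (k c d) x * pd a (pd c (pd d f)) x)
        + (pd a (k c d) x * pd b (pd c (pd d f)) x
        + k c d x * pd a (pd b (pd c (pd d f))) x)))
      + ∑ c, ((pd a (pd b (uu k c)) x * pd c f x + pd b (uu k c) x * pd a (pd c f) x)
        + (pd a (uu k c) x * pd b (pd c f) x + uu k c x * pd a (pd b (pd c f)) x)) := by
    intro a b
    rw [hpdD b]
    have hT1 : ∀ c d : Fin n, ContDiff ℝ (⊤ : ℕ∞)
        (fun y => pd b (k c d) y * pd c (pd d f) y + k c d y * pd b (pd c (pd d f)) y) :=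
      fun c d => ((hkd b c d).mul (h2f c d)).add ((hsmooth c d).mul (h3f b c d))
    have hT2 : ∀ c : Fin n, ContDiff ℝ (⊤ : ℕ∞)
        (fun y => pd b (uu k c) y * pd c f y + uu k c y * pd b (pd c f) y) :=
      fun c => ((hud b c).mul (h1f c)).add ((hu c).mul (pd_smooth (h1f c) b))
    rw [pd_add a x (dAt (ContDiff.sum fun c _ => ContDiff.sum fun d _ => hT1 c d) x)
      (dAt (ContDiff.sum fun c _ => hT2 c) x)]
    congr 1
    · rw [pd_sum_smooth (fun c => fun y => ∑ d, (pd b (k c d) y * pd c (pd d f) y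
          + k c d y * pd b (pd c (pd d f)) y))
        (fun c => ContDiff.sum fun d _ => hT1 c d) a x]
      refine Finset.sum_congr rfl fun c _ => ?_
      rw [pd_sum_smooth (fun d => fun y => pd b (k c d) y * pd c (pd d f) y
          + k c d y * pd b (pd c (pd d f)) y) (fun d => hT1 c d) a x]
      refine Finset.sum_congr rfl fun d _ => ?_
      rw [pd_add a x (dAt ((hkd b c d).mul (h2f c d)) x)
        (dAt ((hsmooth c d).mul (h3f b c d)) x),
        pd_mul a x (dAt (hkd b c d) x) (dAt (h2f c d) x),
        pd_mul a x (dAt (hsmooth c d) x) (dAt (h3f b c d) x)]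
    · rw [pd_sum_smooth (fun c => fun y => pd b (uu k c) y * pd c f y
          + uu k c y * pd b (pd c f) y) (fun c => hT2 c) a x]
      refine Finset.sum_congr rfl fun c _ => ?_
      rw [pd_add a x (dAt ((hud b c).mul (h1f c)) x)
        (dAt ((hu c).mul (pd_smooth (h1f c) b)) x),
        pd_mul a x (dAt (hud b c) x) (dAt (h1f c) x),
        pd_mul a x (dAt (hu c) x) (dAt (pd_smooth (h1f c) b) x)]
  -- the Laplacian of D f split into eight sums
  have hL : lap ginv (D f) x
      = (∑ a, ∑ b, ∑ c, ∑ d, ginv a b * (pd a (pd b (k c d)) x * pd c (pd d f) x))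
      + (∑ a, ∑ b, ∑ c, ∑ d, ginv a b * (pd b (k c d) x * pd a (pd c (pd d f)) x))
      + (∑ a, ∑ b, ∑ c, ∑ d, ginv a b * (pd a (k c d) x * pd b (pd c (pd d f)) x))
      + (∑ a, ∑ b, ∑ c, ∑ d, ginv a b * (k c d x * pd a (pd b (pd c (pd d f))) x))
      + (∑ a, ∑ b, ∑ c, ginv a b * (pd a (pd b (uu k c)) x * pd c f x))
      + (∑ a, ∑ b, ∑ c, ginv a b * (pd b (uu k c) x * pd a (pd c f) x))
      + (∑ a, ∑ b, ∑ c, ginv a b * (pd a (uu k c) x * pd b (pd c f) x))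
      + (∑ a, ∑ b, ∑ c, ginv a b * (uu k c x * pd a (pd b (pd c f)) x)) := by
    show (∑ a, ∑ b, ginv a b * pd a (pd b (D f)) x) = _
    rw [Finset.sum_congr rfl fun a _ => Finset.sum_congr rfl fun b _ => by rw [hpd2D a b]]
    simp only [mul_add, Finset.mul_sum, Finset.sum_add_distrib]
    ring
  -- term 2 vanishes by the Killing equation
  have hA2 : (∑ a, ∑ b, ∑ c, ∑ d, ginv a b * (pd b (k c d) x * pd a (pd c (pd d f)) x))
      = 0 := by
    have h1 : ∀ a : Fin n,
        (∑ b, ∑ c, ∑ d, ginv a b * (pd b (k c d) x * pd a (pd c (pd d f)) x))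
        = ∑ c, ∑ d, pdUp ginv a (k c d) x * pd a (pd c (pd d f)) x := by
      intro a
      rw [sum_rot3'' fun b c d => ginv a b * (pd b (k c d) x * pd a (pd c (pd d f)) x)]
      refine Finset.sum_congr rfl fun c _ => Finset.sum_congr rfl fun d _ => ?_
      rw [show pdUp ginv a (k c d) x = ∑ b, ginv a b * pd b (k c d) x from rfl,
        Finset.sum_mul]
      exact Finset.sum_congr rfl fun b _ => by ring
    rw [Finset.sum_congr rfl fun a _ => h1 a]
    exact third_order hkill f hf x
  -- term 3 vanishes by the Killing equation
  have hA3 : (∑ a, ∑ b, ∑ c, ∑ d, ginv a b * (pd a (k c d) x * pd b (pd c (pd d f)) x))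
      = 0 := by
    have h1 : ∀ b : Fin n,
        (∑ a, ∑ c, ∑ d, ginv a b * (pd a (k c d) x * pd b (pd c (pd d f)) x))
        = ∑ c, ∑ d, pdUp ginv b (k c d) x * pd b (pd c (pd d f)) x := by
      intro b
      rw [sum_rot3'' fun a c d => ginv a b * (pd a (k c d) x * pd b (pd c (pd d f)) x)]
      refine Finset.sum_congr rfl fun c _ => Finset.sum_congr rfl fun d _ => ?_
      rw [show pdUp ginv b (k c d) x = ∑ a, ginv b a * pd a (k c d) x from rfl,
        Finset.sum_mul]
      exact Finset.sum_congr rfl fun a _ => by rw [hGsym a b]; ring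
    calc (∑ a, ∑ b, ∑ c, ∑ d, ginv a b * (pd a (k c d) x * pd b (pd c (pd d f)) x))
        = ∑ b, ∑ a, ∑ c, ∑ d, ginv a b * (pd a (k c d) x * pd b (pd c (pd d f)) x) :=
          Finset.sum_comm
      _ = ∑ b, ∑ c, ∑ d, pdUp ginv b (k c d) x * pd b (pd c (pd d f)) x :=
          Finset.sum_congr rfl fun b _ => h1 b
      _ = 0 := third_order hkill f hf x
  -- term 5 vanishes since Δu = 0
  have hA5 : (∑ a, ∑ b, ∑ c, ginv a b * (pd a (pd b (uu k c)) x * pd c f x)) = 0 := by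
    calc (∑ a, ∑ b, ∑ c, ginv a b * (pd a (pd b (uu k c)) x * pd c f x))
        = ∑ c, ∑ a, ∑ b, ginv a b * (pd a (pd b (uu k c)) x * pd c f x) := sum_rot3' _
      _ = ∑ c, lap ginv (uu k c) x * pd c f x := by
          refine Finset.sum_congr rfl fun c _ => ?_
          rw [show lap ginv (uu k c) x = ∑ a, ∑ b, ginv a b * pd a (pd b (uu k c)) x
              from rfl, Finset.sum_mul]
          refine Finset.sum_congr rfl fun a _ => ?_
          rw [Finset.sum_mul]
          exact Finset.sum_congr rfl fun b _ => by ring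
      _ = 0 := by
          simp only [killing_E2 hgsym hginv hsmooth hsymk hkill, zero_mul,
            Finset.sum_const_zero]
  -- terms 6 and 7 both reduce to the same second-order sum
  have hA6 : (∑ a, ∑ b, ∑ c, ginv a b * (pd b (uu k c) x * pd a (pd c f) x))
      = ∑ c, ∑ d, pdUp ginv c (uu k d) x * pd c (pd d f) x := by
    have h1 : ∀ a : Fin n, (∑ b, ∑ c, ginv a b * (pd b (uu k c) x * pd a (pd c f) x))
        = ∑ c, pdUp ginv a (uu k c) x * pd a (pd c f) x := by
      intro a
      rw [Finset.sum_comm]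
      refine Finset.sum_congr rfl fun c _ => ?_
      rw [show pdUp ginv a (uu k c) x = ∑ b, ginv a b * pd b (uu k c) x from rfl,
        Finset.sum_mul]
      exact Finset.sum_congr rfl fun b _ => by ring
    rw [Finset.sum_congr rfl fun a _ => h1 a]
  have hA7 : (∑ a, ∑ b, ∑ c, ginv a b * (pd a (uu k c) x * pd b (pd c f) x))
      = ∑ c, ∑ d, pdUp ginv c (uu k d) x * pd c (pd d f) x := by
    have h1 : ∀ b : Fin n, (∑ a, ∑ c, ginv a b * (pd a (uu k c) x * pd b (pd c f) x))
        = ∑ c, pdUp ginv b (uu k c) x * pd b (pd c f) x := by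
      intro b
      rw [Finset.sum_comm]
      refine Finset.sum_congr rfl fun c _ => ?_
      rw [show pdUp ginv b (uu k c) x = ∑ a, ginv b a * pd a (uu k c) x from rfl,
        Finset.sum_mul]
      exact Finset.sum_congr rfl fun a _ => by rw [hGsym a b]; ring
    calc (∑ a, ∑ b, ∑ c, ginv a b * (pd a (uu k c) x * pd b (pd c f) x))
        = ∑ b, ∑ a, ∑ c, ginv a b * (pd a (uu k c) x * pd b (pd c f) x) := Finset.sum_comm
      _ = ∑ c, ∑ d, pdUp ginv c (uu k d) x * pd c (pd d f) x :=
          Finset.sum_congr rfl fun b _ => h1 b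
  -- term 1 is the contracted Laplacian of k
  have hA1 : (∑ a, ∑ b, ∑ c, ∑ d, ginv a b * (pd a (pd b (k c d)) x * pd c (pd d f) x))
      = ∑ c, ∑ d, lap ginv (k c d) x * pd c (pd d f) x := by
    rw [sum_swap_pairs fun a b c d => ginv a b * (pd a (pd b (k c d)) x * pd c (pd d f) x)]
    refine Finset.sum_congr rfl fun c _ => Finset.sum_congr rfl fun d _ => ?_
    rw [show lap ginv (k c d) x = ∑ a, ∑ b, ginv a b * pd a (pd b (k c d)) x from rfl,
      Finset.sum_mul]
    refine Finset.sum_congr rfl fun a _ => ?_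
    rw [Finset.sum_mul]
    exact Finset.sum_congr rfl fun b _ => by ring
  -- E1 cancellation: term1 + term6 + term7 = 0
  have hswapS : (∑ c, ∑ d, pdUp ginv d (uu k c) x * pd c (pd d f) x)
      = ∑ c, ∑ d, pdUp ginv c (uu k d) x * pd c (pd d f) x := by
    rw [Finset.sum_comm]
    exact Finset.sum_congr rfl fun d _ => Finset.sum_congr rfl fun c _ => by
      rw [pd_comm hf c d x]
  have h167 : (∑ c, ∑ d, lap ginv (k c d) x * pd c (pd d f) x)
      + (∑ c, ∑ d, pdUp ginv c (uu k d) x * pd c (pd d f) x)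
      + (∑ c, ∑ d, pdUp ginv c (uu k d) x * pd c (pd d f) x) = 0 := by
    have hE1pt : ∀ c d, lap ginv (k c d) x * pd c (pd d f) x
        = -(pdUp ginv c (uu k d) x * pd c (pd d f) x)
          - pdUp ginv d (uu k c) x * pd c (pd d f) x := by
      intro c d
      have h := killing_E1 hsmooth hsymk hkill c d x
      linear_combination (pd c (pd d f) x) * h
    rw [Finset.sum_congr rfl fun c _ => Finset.sum_congr rfl fun d _ => hE1pt c d]
    simp only [Finset.sum_sub_distrib, Finset.sum_neg_distrib]
    rw [hswapS]
    ring
  -- term 4 matches the first part of D (Δ f)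
  have hA4 : (∑ a, ∑ b, ∑ c, ∑ d, ginv a b * (k c d x * pd a (pd b (pd c (pd d f))) x))
      = ∑ c, ∑ d, k c d x * lap ginv (pd c (pd d f)) x := by
    rw [sum_swap_pairs fun a b c d => ginv a b * (k c d x * pd a (pd b (pd c (pd d f))) x)]
    refine Finset.sum_congr rfl fun c _ => Finset.sum_congr rfl fun d _ => ?_
    rw [show lap ginv (pd c (pd d f)) x
        = ∑ a, ∑ b, ginv a b * pd a (pd b (pd c (pd d f))) x from rfl, Finset.mul_sum]
    refine Finset.sum_congr rfl fun a _ => ?_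
    rw [Finset.mul_sum]
    exact Finset.sum_congr rfl fun b _ => by ring
  -- term 8 matches the second part of D (Δ f)
  have hA8 : (∑ a, ∑ b, ∑ c, ginv a b * (uu k c x * pd a (pd b (pd c f)) x))
      = ∑ c, uu k c x * lap ginv (pd c f) x := by
    rw [sum_rot3' fun a b c => ginv a b * (uu k c x * pd a (pd b (pd c f)) x)]
    refine Finset.sum_congr rfl fun c _ => ?_
    rw [show lap ginv (pd c f) x = ∑ a, ∑ b, ginv a b * pd a (pd b (pd c f)) x from rfl,
      Finset.mul_sum]
    refine Finset.sum_congr rfl fun a _ => ?_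
    rw [Finset.mul_sum]
    exact Finset.sum_congr rfl fun b _ => by ring
  -- D applied to the Laplacian of f
  have hR : D (lap ginv f) x = (∑ c, ∑ d, k c d x * lap ginv (pd c (pd d f)) x)
      + ∑ c, uu k c x * lap ginv (pd c f) x := by
    rw [hD (lap ginv f) x]
    congr 1
    · refine Finset.sum_congr rfl fun c _ => Finset.sum_congr rfl fun d _ => ?_
      rw [show pd d (lap ginv f) = lap ginv (pd d f) from funext fun y => pd_lap_comm hf d y,
        pd_lap_comm (pd_smooth hf d) c x]
    · refine Finset.sum_congr rfl fun c _ => ?_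
      rw [pd_lap_comm hf c x]
      rfl
  rw [hL, hR]
  linarith [hA1, hA2, hA3, hA4, hA5, hA6, hA7, hA8, h167]
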